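/- Let α > 0. For every x ∈ [0,1], the value χ_α(−x) is real; the map x ↦ χ_α(−x) is strictly increasing on [0,1]; and χ_α(−1) = α. -/
import Mathlib

open Complex

/-- The principal branch of the complex square root. -/
noncomputable def csqrt (z : ℂ) : ℂ := z ^ (1 / 2 : ℂ)

/-- `χ_α(z) := (1/2)·√(4α²+(1+z)²) + ((1+z)/2)·log(2α/(1+z+√(4α²+(1+z)²)))`,
with principal branches of square root and logarithm. -/
noncomputable def chi (α : ℝ) (z : ℂ) : ℂ :=
  (1 / 2 : ℂ) * csqrt (4 * (α : ℂ) ^ 2 + (1 + z) ^ 2) +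
    (1 + z) / 2 * Complex.log (2 * (α : ℂ) / (1 + z + csqrt (4 * (α : ℂ) ^ 2 + (1 + z) ^ 2)))

noncomputable def Freal (α x : ℝ) : ℝ :=
  (1 / 2) * Real.sqrt (4 * α ^ 2 + (1 - x) ^ 2) +
    ((1 - x) / 2) * Real.log (2 * α / ((1 - x) + Real.sqrt (4 * α ^ 2 + (1 - x) ^ 2)))

lemma upos (α x : ℝ) (hα : 0 < α) : 0 < 4 * α ^ 2 + (1 - x) ^ 2 := by positivity

lemma denpos (α x : ℝ) (hα : 0 < α) : 0 < (1 - x) + Real.sqrt (4 * α ^ 2 + (1 - x) ^ 2) := by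
  have h1 : |1 - x| < Real.sqrt (4 * α ^ 2 + (1 - x) ^ 2) := by
    rw [← Real.sqrt_sq_eq_abs]
    exact Real.sqrt_lt_sqrt (sq_nonneg _) (by nlinarith)
  have := neg_abs_le (1 - x)
  linarith

lemma chi_eq (α x : ℝ) (hα : 0 < α) : chi α (-(x : ℂ)) = (Freal α x : ℂ) := by
  have hu : (0:ℝ) ≤ 4 * α ^ 2 + (1 - x) ^ 2 := (upos α x hα).le
  have harg : 4 * (α : ℂ) ^ 2 + (1 + -(x:ℂ)) ^ 2 = ((4 * α ^ 2 + (1 - x) ^ 2 : ℝ) : ℂ) := by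
    push_cast; ring
  have hsq : csqrt (4 * (α : ℂ) ^ 2 + (1 + -(x:ℂ)) ^ 2)
      = ((Real.sqrt (4 * α ^ 2 + (1 - x) ^ 2) : ℝ) : ℂ) := by
    rw [harg, csqrt]
    rw [show ((1:ℂ)/2) = (((1/2 : ℝ)):ℂ) by norm_num]
    rw [← Complex.ofReal_cpow hu, Real.sqrt_eq_rpow]
  have hden : 0 < (1 - x) + Real.sqrt (4 * α ^ 2 + (1 - x) ^ 2) := denpos α x hα
  have hquot : 2 * (α : ℂ) / (1 + -(x:ℂ) + ((Real.sqrt (4 * α ^ 2 + (1 - x) ^ 2) : ℝ) : ℂ))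
      = ((2 * α / ((1 - x) + Real.sqrt (4 * α ^ 2 + (1 - x) ^ 2)) : ℝ) : ℂ) := by
    push_cast; ring
  have hpos : 0 < 2 * α / ((1 - x) + Real.sqrt (4 * α ^ 2 + (1 - x) ^ 2)) := by positivity
  rw [chi, hsq, hquot, ← Complex.ofReal_log hpos.le, Freal]
  push_cast; ring

lemma hasDerivAt_F (α : ℝ) (hα : 0 < α) (x : ℝ) :
    HasDerivAt (Freal α)
      (-(1/2) * Real.log (2 * α / ((1 - x) + Real.sqrt (4 * α ^ 2 + (1 - x) ^ 2)))) x := by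
  set s := Real.sqrt (4 * α ^ 2 + (1 - x) ^ 2) with hs_def
  have hu : 0 < 4 * α ^ 2 + (1 - x) ^ 2 := upos α x hα
  have hspos : 0 < s := Real.sqrt_pos.2 hu
  have hden : 0 < (1 - x) + s := denpos α x hα
  have h1 : HasDerivAt (fun y : ℝ => 1 - y) (-1) x := (hasDerivAt_id x).const_sub 1
  have h2 : HasDerivAt (fun y : ℝ => 4 * α ^ 2 + (1 - y) ^ 2)
      ((2:ℕ) * (1 - x) ^ 1 * (-1)) x := (h1.pow 2).const_add (4 * α ^ 2)
  have hs : HasDerivAt (fun y : ℝ => Real.sqrt (4 * α ^ 2 + (1 - y) ^ 2))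
      (((2:ℕ) * (1 - x) ^ 1 * (-1)) / (2 * s)) x := h2.sqrt hu.ne'
  have hts : HasDerivAt (fun y : ℝ => (1 - y) + Real.sqrt (4 * α ^ 2 + (1 - y) ^ 2))
      (-1 + ((2:ℕ) * (1 - x) ^ 1 * (-1)) / (2 * s)) x := h1.add hs
  have hlog : HasDerivAt (fun y : ℝ => Real.log ((1 - y) + Real.sqrt (4 * α ^ 2 + (1 - y) ^ 2)))
      ((-1 + ((2:ℕ) * (1 - x) ^ 1 * (-1)) / (2 * s)) / ((1 - x) + s)) x := hts.log hden.ne'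
  have hL : HasDerivAt (fun y : ℝ => Real.log (2 * α) -
        Real.log ((1 - y) + Real.sqrt (4 * α ^ 2 + (1 - y) ^ 2)))
      (-((-1 + ((2:ℕ) * (1 - x) ^ 1 * (-1)) / (2 * s)) / ((1 - x) + s))) x :=
    hlog.const_sub (Real.log (2 * α))
  have hmain : HasDerivAt (fun y : ℝ => (1/2) * Real.sqrt (4 * α ^ 2 + (1 - y) ^ 2)
        + ((1 - y) / 2) * (Real.log (2 * α) -
            Real.log ((1 - y) + Real.sqrt (4 * α ^ 2 + (1 - y) ^ 2))))
      ((1/2) * (((2:ℕ) * (1 - x) ^ 1 * (-1)) / (2 * s))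
        + (((-1)/2) * (Real.log (2 * α) - Real.log ((1 - x) + s))
          + ((1 - x)/2) * (-((-1 + ((2:ℕ) * (1 - x) ^ 1 * (-1)) / (2 * s)) / ((1 - x) + s))))) x :=
    (hs.const_mul (1/2)).add ((h1.div_const 2).mul hL)
  have hFeq : Freal α = fun y : ℝ => (1/2) * Real.sqrt (4 * α ^ 2 + (1 - y) ^ 2)
      + ((1 - y) / 2) * (Real.log (2 * α) -
          Real.log ((1 - y) + Real.sqrt (4 * α ^ 2 + (1 - y) ^ 2))) := by
    funext y
    rw [Freal, Real.log_div (by positivity) (denpos α y hα).ne']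
  rw [hFeq]
  convert hmain using 1
  rw [Real.log_div (by positivity) hden.ne']
  have hss : s * s = 4 * α ^ 2 + (1 - x) ^ 2 := Real.mul_self_sqrt hu.le
  field_simp
  ring

theorem chi_real_on_segment (α : ℝ) (hα : 0 < α) :
    (∀ x ∈ Set.Icc (0 : ℝ) 1, (chi α (-(x : ℂ))).im = 0) ∧
    StrictMonoOn (fun x : ℝ => (chi α (-(x : ℂ))).re) (Set.Icc (0 : ℝ) 1) ∧
    chi α (-1) = (α : ℂ) := by
  have hF : StrictMonoOn (Freal α) (Set.Icc (0:ℝ) 1) := by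
    apply strictMonoOn_of_deriv_pos (convex_Icc 0 1)
    · exact (Differentiable.continuous fun x => (hasDerivAt_F α hα x).differentiableAt).continuousOn
    · intro x hx
      rw [interior_Icc] at hx
      rw [(hasDerivAt_F α hα x).deriv]
      have hs2 : Real.sqrt (4 * α ^ 2) ≤ Real.sqrt (4 * α ^ 2 + (1 - x) ^ 2) :=
        Real.sqrt_le_sqrt (by nlinarith)
      have h4 : Real.sqrt (4 * α ^ 2) = 2 * α := by
        rw [show 4 * α ^ 2 = (2*α)^2 by ring, Real.sqrt_sq (by linarith)]
      have hlt : 2 * α < (1 - x) + Real.sqrt (4 * α ^ 2 + (1 - x) ^ 2) := by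
        have := hx.2; rw [h4] at hs2; linarith
      have hden : 0 < (1 - x) + Real.sqrt (4 * α ^ 2 + (1 - x) ^ 2) := denpos α x hα
      have hneg : Real.log (2 * α / ((1 - x) + Real.sqrt (4 * α ^ 2 + (1 - x) ^ 2))) < 0 :=
        Real.log_neg (by positivity) ((div_lt_one hden).2 hlt)
      linarith
  refine ⟨fun x _ => by rw [chi_eq α x hα]; exact Complex.ofReal_im _, ?_, ?_⟩
  · intro a ha b hb hab
    simpa only [chi_eq α a hα, chi_eq α b hα, Complex.ofReal_re] using hF ha hb hab
  · have h1 : Freal α 1 = α := by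
      rw [Freal, show (4 * α ^ 2 + (1 - 1) ^ 2) = (2*α)^2 by ring,
        Real.sqrt_sq (by linarith)]
      ring
    rw [show (-1 : ℂ) = -((1:ℝ):ℂ) by norm_num, chi_eq α 1 hα, h1]
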